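/- arXiv:2002.03629 — 4 statements merged into one kernel-verified Lean document; each statement's English description precedes it below -/
import Mathlib

section
/- The Gauss-Seidel-Jacobi hybrid method converges exactly: partition $\{1, \dots, T\}$ into consecutive integer-interval blocks $\mathcal{B}_1, \dots, \mathcal{B}_M$; process blocks sequentially, and within block $\mathcal{B}_i = [a, b]$ run Jacobi iterations $\mathbf{s}_j^{k+1} = h_j(\mathbf{u}, \mathbf{s}_{1:a-1}, \mathbf{s}_{a:j-1}^{k})$ (with the already-finalized values $\mathbf{s}_{1:a-1}$ from previous blocks) for $|\mathcal{B}_i|$ iterations. Then the final output equals the feedforward solution $\mathbf{s}^*_{1:T}$, for any initializations. -/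
/-- The Gauss-Seidel-Jacobi hybrid method converges exactly: processing
consecutive blocks `[b i, b (i+1))` sequentially, running `|B_i|` parallel
Jacobi iterations within each block (conditioning on finalized earlier
blocks), the final output equals the feedforward solution. -/
theorem gs_jacobi_converges {S U : Type*} {T M : ℕ}
    (h : Fin T → U → (Fin T → S) → S)
    (htri : ∀ (t : Fin T) (u : U) (x y : Fin T → S),
      (∀ j : Fin T, (j : ℕ) < (t : ℕ) → x j = y j) → h t u x = h t u y)
    (u : U) (sStar : Fin T → S)
    (hstar : ∀ t, sStar t = h t u sStar)
    (b : ℕ → ℕ)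
    (hb0 : b 0 = 0) (hbM : b M = T)
    (hbmono : ∀ i, i < M → b i < b (i + 1))
    (s : Fin T → S)                       -- final output
    (w : ℕ → ℕ → Fin T → S)               -- within-block Jacobi iterates
    -- values in earlier blocks are the already-finalized outputs:
    (hleft : ∀ i, i < M → ∀ k, ∀ j : Fin T, (j : ℕ) < b i → w i k j = s j)
    -- within-block parallel Jacobi update:
    (hup : ∀ i, i < M → ∀ k, ∀ j : Fin T,
      b i ≤ (j : ℕ) → (j : ℕ) < b (i + 1) → w i (k + 1) j = h j u (w i k))
    -- after `|B_i|` iterations the block is finalized: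
    (hfin : ∀ i, i < M → ∀ j : Fin T,
      b i ≤ (j : ℕ) → (j : ℕ) < b (i + 1) → s j = w i (b (i + 1) - b i) j) :
    s = sStar := by
  -- Main claim: for each i ≤ M, all entries before b i are correct.
  have main : ∀ i, i ≤ M → ∀ j : Fin T, (j : ℕ) < b i → s j = sStar j := by
    intro i
    induction i with
    | zero => intro _ j hj; omega
    | succ i ih =>
      intro hiM j hj
      have hiM' : i < M := Nat.lt_of_succ_le hiM
      have ih' := ih (le_of_lt hiM')
      -- within-block induction: after k iterations, first k entries of the block correct
      have key : ∀ k, ∀ j : Fin T, b i ≤ (j : ℕ) → (j : ℕ) < b i + k →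
          (j : ℕ) < b (i + 1) → w i k j = sStar j := by
        intro k
        induction k with
        | zero => intro j h1 h2 _; omega
        | succ k ihk =>
          intro j h1 h2 h3
          rw [hup i hiM' k j h1 h3, hstar j]
          apply htri
          intro j' hj'
          by_cases hc : (j' : ℕ) < b i
          · rw [hleft i hiM' k j' hc, ih' j' hc]
          · exact ihk j' (le_of_not_gt hc) (by omega) (by omega)
      by_cases hc : (j : ℕ) < b i
      · exact ih' j hc
      · have h1 : b i ≤ (j : ℕ) := le_of_not_gt hc
        rw [hfin i hiM' j h1 hj]
        exact key (b (i+1) - b i) j h1 (by have := hbmono i hiM'; omega) hj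
  funext j
  exact main M le_rfl j (by rw [hbM]; exact j.isLt)
end

section
/- Markov chain worst case: let $\mathbf{s}_1 = h_1(\mathbf{u})$ and $\mathbf{s}_t = h_t(\mathbf{s}_{t-1})$ for $t > 1$ (each $h_t$, $t>1$, depends only on the immediately preceding state). For the Jacobi iteration with a fixed initialization $\mathbf{s}^0$, the iterate $\mathbf{s}_T^k$ for $k < T$ is a function of $\mathbf{s}^0$ alone and does not depend on the input $\mathbf{u}$. Consequently, if there exist two inputs $\mathbf{u}, \mathbf{u}'$ whose feedforward solutions differ at coordinate $T$, then for at least one of them the Jacobi iteration from $\mathbf{s}^0$ has not converged at coordinate $T$ after $T-1$ iterations. -/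
lemma jacobi_indep {S U : Type*}
    (h1 : U → S) (g : ℕ → S → S) (s0 : ℕ → S)
    (s : U → ℕ → ℕ → S)
    (hinit : ∀ u t, s u 0 t = s0 t)
    (hup : ∀ u k t, s u (k + 1) (t + 1) = g (t + 1) (s u k t)) :
    ∀ k t, k ≤ t → ∀ u u', s u k t = s u' k t := by
  intro k
  induction k with
  | zero => intro t _ u u'; rw [hinit, hinit]
  | succ k ih =>
    intro t hkt u u'
    obtain ⟨t', rfl⟩ : ∃ t', t = t' + 1 := ⟨t - 1, by omega⟩
    rw [hup, hup, ih t' (by omega) u u']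

/-- Markov chain worst case (states indexed `0, …, T-1`): the Jacobi iterate
at the last coordinate is independent of the input for fewer than `T`
iterations; hence if two inputs have feedforward solutions differing at the
last coordinate, for at least one of them Jacobi has not converged there
after `T - 1` iterations. -/
theorem jacobi_markov_worst_case {S U : Type*} (T : ℕ) (hT : 1 ≤ T)
    (h1 : U → S) (g : ℕ → S → S) (s0 : ℕ → S)
    (s : U → ℕ → ℕ → S)
    (hinit : ∀ u t, s u 0 t = s0 t)
    (hup0 : ∀ u k, s u (k + 1) 0 = h1 u)
    (hup : ∀ u k t, s u (k + 1) (t + 1) = g (t + 1) (s u k t))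
    (star : U → ℕ → S)
    (hstar0 : ∀ u, star u 0 = h1 u)
    (hstar : ∀ u t, star u (t + 1) = g (t + 1) (star u t)) :
    (∀ (u u' : U) (k : ℕ), k < T → s u k (T - 1) = s u' k (T - 1)) ∧
    (∀ u u' : U, star u (T - 1) ≠ star u' (T - 1) →
      s u (T - 1) (T - 1) ≠ star u (T - 1) ∨
      s u' (T - 1) (T - 1) ≠ star u' (T - 1)) := by
  have key := jacobi_indep h1 g s0 s hinit hup
  refine ⟨fun u u' k hk => key k (T - 1) (by omega) u u', fun u u' hne => ?_⟩
  by_contra h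
  push_neg at h
  exact hne (h.1 ▸ h.2 ▸ key (T - 1) (T - 1) le_rfl u u')
end

section
/- In the Markov chain setting, information propagates exactly one step per Jacobi iteration: for $k \geq 0$ and $t > k$, the Jacobi iterate $\mathbf{s}_t^k$ equals $h_t(h_{t-1}(\cdots h_{t-k+1}(\mathbf{s}_{t-k}^0)))$ (a function of the initialization only), while for $t \leq k$ it equals the true solution $\mathbf{s}_t^*$. -/
/-- `chain g t k x = g t (g (t-1) (⋯ g (t-k+1) x))`. -/
def chain {S : Type*} (g : ℕ → S → S) : ℕ → ℕ → S → S
  | _, 0, x => x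
  | t, k + 1, x => g t (chain g (t - 1) k x)

/-- In the Markov setting, information propagates exactly one step per Jacobi
iteration: for `t ≥ k` (0-indexed) the iterate `s u k t` is
`g t (g (t-1) (⋯ g (t-k+1) (s0 (t-k))))`, a function of the initialization
only, while for `t < k` it equals the true solution. -/
theorem jacobi_markov_propagation {S U : Type*}
    (h1 : U → S) (g : ℕ → S → S) (s0 : ℕ → S)
    (s : U → ℕ → ℕ → S)
    (hinit : ∀ u t, s u 0 t = s0 t)
    (hup0 : ∀ u k, s u (k + 1) 0 = h1 u)
    (hup : ∀ u k t, s u (k + 1) (t + 1) = g (t + 1) (s u k t))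
    (star : U → ℕ → S)
    (hstar0 : ∀ u, star u 0 = h1 u)
    (hstar : ∀ u t, star u (t + 1) = g (t + 1) (star u t)) :
    (∀ (u : U) (k t : ℕ), k ≤ t → s u k t = chain g t k (s0 (t - k))) ∧
    (∀ (u : U) (k t : ℕ), t < k → s u k t = star u t) := by
  constructor
  · intro u k
    induction k with
    | zero => intro t _; simp [chain, hinit]
    | succ k ih =>
      intro t hkt
      obtain ⟨t', rfl⟩ : ∃ t', t = t' + 1 := ⟨t - 1, by omega⟩
      rw [hup, ih t' (by omega)]
      simp [chain]
  · intro u k t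
    induction t generalizing k with
    | zero =>
      intro hk
      obtain ⟨m, rfl⟩ : ∃ m, k = m + 1 := ⟨k - 1, by omega⟩
      rw [hup0, hstar0]
    | succ t ih =>
      intro hk
      obtain ⟨m, rfl⟩ : ∃ m, k = m + 1 := ⟨k - 1, by omega⟩
      rw [hup, ih m (by omega), hstar]
end

section
/- Jacobi-GS with block sizes at least $1$ converges at least as fast as Jacobi in block count: if the blocks are consecutive intervals $\mathcal{B}_1, \dots, \mathcal{B}_M$ each of size $\geq 1$, then after $k$ Jacobi-GS iterations all states with index in $\mathcal{B}_1 \cup \cdots \cup \mathcal{B}_k$ equal the true solution; in particular since $M \leq T$, the number of parallel Jacobi-GS iterations needed is at most the number of parallel Jacobi iterations needed ($M \leq T$). -/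
/-- Jacobi-GS with nonempty consecutive blocks `B_1, …, B_M` converges at
least as fast as Jacobi in block count: after `k` iterations all states in
the first `k` blocks equal the true solution, and `M ≤ T`. -/
theorem jacobi_gs_block_speed {S U : Type*} {T M : ℕ}
    (h : Fin T → U → (Fin T → S) → S)
    (htri : ∀ (t : Fin T) (u : U) (x y : Fin T → S),
      (∀ j : Fin T, (j : ℕ) < (t : ℕ) → x j = y j) → h t u x = h t u y)
    (u : U) (sStar : Fin T → S)
    (hstar : ∀ t, sStar t = h t u sStar)
    (b : ℕ → ℕ)
    (hb0 : b 0 = 0) (hbM : b M = T)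
    (hbmono : ∀ i, i < M → b i < b (i + 1))
    (s : ℕ → Fin T → S)
    (hup : ∀ k, ∀ i, i < M → ∀ j : Fin T,
      b i ≤ (j : ℕ) → (j : ℕ) < b (i + 1) →
      s (k + 1) j =
        h j u (fun p => if (p : ℕ) < b i then s k p else s (k + 1) p)) :
    (∀ k, ∀ i, i < M → i < k → ∀ j : Fin T,
      b i ≤ (j : ℕ) → (j : ℕ) < b (i + 1) → s k j = sStar j) ∧
    M ≤ T := by
  have hblock : ∀ i, i ≤ M → ∀ p : ℕ, p < b i → ∃ i', i' < i ∧ b i' ≤ p ∧ p < b (i' + 1) := by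
    intro i
    induction i with
    | zero => intro _ p hp; simp [hb0] at hp
    | succ n ih =>
      intro hn p hp
      by_cases hpn : b n ≤ p
      · exact ⟨n, Nat.lt_succ_self n, hpn, hp⟩
      · obtain ⟨i', h1, h2, h3⟩ := ih (Nat.le_of_succ_le hn) p (Nat.lt_of_not_le hpn)
        exact ⟨i', Nat.lt_succ_of_lt h1, h2, h3⟩
  constructor
  · intro k
    induction k with
    | zero => intro i _ hik; omega
    | succ k ih =>
      intro i hiM hik j hbj hjb
      have main : ∀ n : ℕ, ∀ j : Fin T, (j : ℕ) = n → b i ≤ (j : ℕ) → (j : ℕ) < b (i + 1) →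
          s (k + 1) j = sStar j := by
        intro n
        induction n using Nat.strong_induction_on with
        | _ n ihn =>
          intro j hjn hbj hjb
          rw [hup k i hiM j hbj hjb, hstar j]
          apply htri
          intro p hp
          by_cases hpi : (p : ℕ) < b i
          · rw [if_pos hpi]
            obtain ⟨i', h1, h2, h3⟩ := hblock i (le_of_lt hiM) p hpi
            exact ih i' (h1.trans hiM) (by omega) p h2 h3
          · rw [if_neg hpi]
            exact ihn (p : ℕ) (by omega) p rfl (by omega) (by omega)
      exact main (j : ℕ) j rfl hbj hjb
  · have hm : ∀ i, i ≤ M → i ≤ b i := by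
      intro i
      induction i with
      | zero => simp
      | succ n ih =>
        intro hn
        have := hbmono n (by omega)
        have := ih (by omega)
        omega
    have := hm M le_rfl
    omega
end
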